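/- Assume k is algebraically closed. For each w ∈ W, the set 𝒢-max_w R coincides with the set of maximal members (under inclusion) of 𝒢-spec_w R. -/

import Mathlib

open MvPolynomial

/-- The action of `h ∈ (kˣ)ⁿ` on `k[y₁,…,yₙ]` by `yᵢ ↦ hᵢ yᵢ`. -/
noncomputable def tact {k : Type*} [CommSemiring k] {n : ℕ} (h : Fin n → kˣ) :
    MvPolynomial (Fin n) k →ₐ[k] MvPolynomial (Fin n) k :=
  aeval fun i => (h i : k) • X i

/-- `(I : G) = ⋂_{g ∈ G} g(I)` for a subgroup `G` of the torus `(kˣ)ⁿ`. -/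
noncomputable def resT {k : Type*} [CommSemiring k] {n : ℕ} (G : Subgroup (Fin n → kˣ))
    (I : Ideal (MvPolynomial (Fin n) k)) : Ideal (MvPolynomial (Fin n) k) :=
  ⨅ g ∈ G, Ideal.comap (tact g) I

/-- `spec_w R`: primes `P` with `P ∩ {y₁,…,yₙ} = {yᵢ : i ∈ w}`. -/
def specW (k : Type*) [CommSemiring k] {n : ℕ} (w : Set (Fin n)) :
    Set (Ideal (MvPolynomial (Fin n) k)) :=
  {P | P.IsPrime ∧ ∀ i, X i ∈ P ↔ i ∈ w}

/-- `max_w R = max R ∩ spec_w R`. -/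
def maxW (k : Type*) [CommSemiring k] {n : ℕ} (w : Set (Fin n)) :
    Set (Ideal (MvPolynomial (Fin n) k)) :=
  {M | M.IsMaximal ∧ ∀ i, X i ∈ M ↔ i ∈ w}

/-- `𝒢-spec_w R = {(P : G_w) : P ∈ spec_w R}`. -/
def GspecW {k : Type*} [CommSemiring k] {n : ℕ}
    (G : Set (Fin n) → Subgroup (Fin n → kˣ)) (w : Set (Fin n)) :
    Set (Ideal (MvPolynomial (Fin n) k)) :=
  {Q | ∃ P ∈ specW k w, Q = resT (G w) P}

/-- `𝒢-spec R`, the set of `𝒢`-prime ideals. -/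
def GspecAll {k : Type*} [CommSemiring k] {n : ℕ}
    (G : Set (Fin n) → Subgroup (Fin n → kˣ)) :
    Set (Ideal (MvPolynomial (Fin n) k)) :=
  ⋃ w, GspecW G w

/-- `𝒢`-semiprime ideals: intersections of collections of `𝒢`-prime ideals. -/
def GSemiprime {k : Type*} [CommSemiring k] {n : ℕ}
    (G : Set (Fin n) → Subgroup (Fin n → kˣ))
    (J : Ideal (MvPolynomial (Fin n) k)) : Prop :=
  ∃ T ⊆ GspecAll G, J = sInf T

/-- `𝒢-max_w R = {(M : G_w) : M ∈ max_w R}`. -/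
def GmaxW {k : Type*} [CommSemiring k] {n : ℕ}
    (G : Set (Fin n) → Subgroup (Fin n → kˣ)) (w : Set (Fin n)) :
    Set (Ideal (MvPolynomial (Fin n) k)) :=
  {Q | ∃ M ∈ maxW k w, Q = resT (G w) M}

/-- `𝒢-max R`. -/
def GmaxAll {k : Type*} [CommSemiring k] {n : ℕ}
    (G : Set (Fin n) → Subgroup (Fin n → kˣ)) :
    Set (Ideal (MvPolynomial (Fin n) k)) :=
  ⋃ w, GmaxW G w

/-- `P ↦ (P : 𝒢)`, i.e. `(P : G_w)` where `w = {i : yᵢ ∈ P}`. -/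
noncomputable def Gquot {k : Type*} [CommSemiring k] {n : ℕ}
    (G : Set (Fin n) → Subgroup (Fin n → kˣ))
    (P : Ideal (MvPolynomial (Fin n) k)) : Ideal (MvPolynomial (Fin n) k) :=
  resT (G {i | X i ∈ P}) P


section Aux

variable {k : Type*} [Field k] {n : ℕ}

lemma mem_resT {G : Subgroup (Fin n → kˣ)} {I : Ideal (MvPolynomial (Fin n) k)}
    {f : MvPolynomial (Fin n) k} : f ∈ resT G I ↔ ∀ g ∈ G, tact g f ∈ I := by
  simp [resT, Ideal.mem_iInf, Ideal.mem_comap]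

lemma resT_mono (G : Subgroup (Fin n → kˣ)) {I J : Ideal (MvPolynomial (Fin n) k)}
    (h : I ≤ J) : resT G I ≤ resT G J := fun f hf =>
  mem_resT.2 fun g hg => h (mem_resT.1 hf g hg)

lemma tact_eval (g : Fin n → kˣ) (b : Fin n → k) (f : MvPolynomial (Fin n) k) :
    eval b (tact g f) = eval (fun i => (g i : k) * b i) f := by
  induction f using MvPolynomial.induction_on with
  | C a => simp [tact]
  | add p q hp hq => simp [map_add, hp, hq]
  | mul_X p i hp =>
      simp only [tact] at hp ⊢
      rw [map_mul, eval_mul, hp, aeval_X]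
      simp

lemma mem_resT_vanishing {G : Subgroup (Fin n → kˣ)} {a : Fin n → k}
    {f : MvPolynomial (Fin n) k} :
    f ∈ resT G (vanishingIdeal k {a}) ↔ ∀ g ∈ G, eval (fun i => (g i : k) * a i) f = 0 := by
  simp [mem_resT, MvPolynomial.mem_vanishingIdeal_singleton_iff, coe_aeval_eq_eval, tact_eval]

/-- `a^m = ∏ i, a i ^ m i`. -/
def mpow (a : Fin n → k) (m : Fin n →₀ ℕ) : k := ∏ i, a i ^ m i

/-- The character `g ↦ g^m` of a subgroup of the torus. -/
def chi (Γ : Subgroup (Fin n → kˣ)) (m : Fin n →₀ ℕ) : Γ →* k where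
  toFun g := ∏ i, ((g : Fin n → kˣ) i : k) ^ m i
  map_one' := by simp
  map_mul' g h := by simp [mul_pow, Finset.prod_mul_distrib]

lemma mpow_ne_zero_of_pattern {a a' : Fin n → k} (hpat : ∀ i, a i = 0 ↔ a' i = 0)
    {m : Fin n →₀ ℕ} (h : mpow a m ≠ 0) : mpow a' m ≠ 0 := by
  intro h0
  apply h
  rw [mpow] at h0 ⊢
  obtain ⟨i, -, hi⟩ := Finset.prod_eq_zero_iff.1 h0
  refine Finset.prod_eq_zero (Finset.mem_univ i) ?_
  rw [pow_eq_zero_iff'] at hi ⊢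
  exact ⟨(hpat i).2 hi.1, hi.2⟩

lemma eval_torus_eq (Γ : Subgroup (Fin n → kˣ)) (b : Fin n → k)
    (f : MvPolynomial (Fin n) k) (g : Γ) :
    eval (fun i => ((g : Fin n → kˣ) i : k) * b i) f
      = ∑ m ∈ f.support, coeff m f * mpow b m * chi Γ m g := by
  rw [eval_eq']
  refine Finset.sum_congr rfl fun m _ => ?_
  rw [mpow]
  show _ = _ * _ * ∏ i, ((g : Fin n → kˣ) i : k) ^ m i
  rw [mul_assoc, ← Finset.prod_mul_distrib]
  congr 1
  refine Finset.prod_congr rfl fun i _ => ?_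
  rw [← mul_pow]
  ring

lemma class_sums (Γ : Subgroup (Fin n → kˣ)) [DecidableEq (↥Γ →* k)] (b : Fin n → k) (f : MvPolynomial (Fin n) k)
    (hz : ∀ g ∈ Γ, eval (fun i => (g i : k) * b i) f = 0) (m₀ : Fin n →₀ ℕ) :
    ∑ m ∈ f.support.filter (fun m => chi Γ m = chi Γ m₀), coeff m f * mpow b m = 0 := by
  rcases Finset.eq_empty_or_nonempty (f.support.filter (fun m => chi Γ m = chi Γ m₀)) with
    he | hne
  · rw [he, Finset.sum_empty]
  have hmem : chi Γ m₀ ∈ f.support.image (chi Γ) := by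
    obtain ⟨m, hm⟩ := hne
    rw [Finset.mem_filter] at hm
    exact hm.2 ▸ Finset.mem_image_of_mem _ hm.1
  have hsum : ∑ χ ∈ f.support.image (chi Γ),
      (∑ m ∈ f.support.filter (fun m => chi Γ m = χ), coeff m f * mpow b m) • (⇑χ : Γ → k)
        = 0 := by
    ext g
    rw [Finset.sum_apply, Pi.zero_apply]
    have hterm : ∀ χ ∈ f.support.image (chi Γ),
        ((∑ m ∈ f.support.filter (fun m => chi Γ m = χ), coeff m f * mpow b m) • (⇑χ : Γ → k)) g
          = ∑ m ∈ f.support.filter (fun m => chi Γ m = χ), coeff m f * mpow b m * chi Γ m g := by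
      intro χ _
      rw [Pi.smul_apply, smul_eq_mul, Finset.sum_mul]
      exact Finset.sum_congr rfl fun m hm => by
        rw [mul_assoc, (Finset.mem_filter.1 hm).2, mul_assoc]
    rw [Finset.sum_congr rfl hterm,
      Finset.sum_fiberwise_of_maps_to (fun m hm => Finset.mem_image_of_mem _ hm),
      ← eval_torus_eq Γ b f g]
    exact hz g g.2
  exact linearIndependent_iff'.1 (linearIndependent_monoidHom Γ k) _ _ hsum (chi Γ m₀) hmem

lemma eval_zero_of_class_sums (Γ : Subgroup (Fin n → kˣ)) [DecidableEq (↥Γ →* k)] (b : Fin n → k)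
    (f : MvPolynomial (Fin n) k)
    (hz : ∀ m₀,
      ∑ m ∈ f.support.filter (fun m => chi Γ m = chi Γ m₀), coeff m f * mpow b m = 0) :
    ∀ g ∈ Γ, eval (fun i => (g i : k) * b i) f = 0 := by
  intro g hg
  rw [show (fun i => (g i : k) * b i)
      = (fun i => (((⟨g, hg⟩ : Γ) : Fin n → kˣ) i : k) * b i) from rfl,
    eval_torus_eq Γ b f ⟨g, hg⟩,
    ← Finset.sum_fiberwise_of_maps_to
      (fun m hm => Finset.mem_image_of_mem (chi Γ) hm)
      (fun m => coeff m f * mpow b m * chi Γ m ⟨g, hg⟩)]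
  refine Finset.sum_eq_zero fun χ hχ => ?_
  obtain ⟨m₀, hm₀, rfl⟩ := Finset.mem_image.1 hχ
  have hfac : ∑ m ∈ f.support.filter (fun m => chi Γ m = chi Γ m₀),
      coeff m f * mpow b m * chi Γ m ⟨g, hg⟩
      = (∑ m ∈ f.support.filter (fun m => chi Γ m = chi Γ m₀), coeff m f * mpow b m)
          * chi Γ m₀ ⟨g, hg⟩ := by
    rw [Finset.sum_mul]
    exact Finset.sum_congr rfl fun m hm => by rw [(Finset.mem_filter.1 hm).2]
  rw [hfac, hz m₀, zero_mul]

lemma prod_pow_mul (g : Fin n → kˣ) (b : Fin n → k) (m : Fin n →₀ ℕ) :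
    ∏ i, ((g i : k) * b i) ^ m i = (∏ i, b i ^ m i) * ∏ i, (g i : k) ^ m i := by
  rw [← Finset.prod_mul_distrib]
  exact Finset.prod_congr rfl fun i _ => by rw [← mul_pow]; ring

lemma stepA (Γ : Subgroup (Fin n → kˣ)) {a a' : Fin n → k}
    (hle : resT Γ (vanishingIdeal k {a}) ≤ resT Γ (vanishingIdeal k {a'}))
    {m m' : Fin n →₀ ℕ} (hmm : chi Γ m = chi Γ m') :
    mpow a m' * mpow a' m = mpow a m * mpow a' m' := by
  set f₀ : MvPolynomial (Fin n) k :=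
    C (mpow a m') * monomial m 1 - C (mpow a m) * monomial m' 1 with hf₀
  have hevalb : ∀ b : Fin n → k, ∀ g : Fin n → kˣ,
      eval (fun i => (g i : k) * b i) f₀
        = mpow a m' * (mpow b m * ∏ i, (g i : k) ^ m i)
          - mpow a m * (mpow b m' * ∏ i, (g i : k) ^ m' i) := by
    intro b g
    rw [hf₀]
    simp only [map_sub, map_mul, eval_C, eval_monomial, Finsupp.prod_pow, one_mul]
    rw [prod_pow_mul, prod_pow_mul]
    simp only [mpow]
    try ring
  have h₀ : f₀ ∈ resT Γ (vanishingIdeal k {a}) := by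
    rw [mem_resT_vanishing]
    intro g hg
    rw [hevalb a g]
    have hchi : (∏ i, (g i : k) ^ m i) = ∏ i, (g i : k) ^ m' i :=
      DFunLike.congr_fun hmm ⟨g, hg⟩
    rw [hchi]; ring
  have h₁ := mem_resT_vanishing.1 (hle h₀) 1 Γ.one_mem
  rw [hevalb a' 1] at h₁
  simp only [Units.val_one, Pi.one_apply, one_pow, Finset.prod_const_one, mul_one] at h₁
  exact sub_eq_zero.1 h₁

lemma key (Γ : Subgroup (Fin n → kˣ)) {a a' : Fin n → k}
    (hpat : ∀ i, a i = 0 ↔ a' i = 0)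
    (hle : resT Γ (vanishingIdeal k {a}) ≤ resT Γ (vanishingIdeal k {a'})) :
    resT Γ (vanishingIdeal k {a'}) ≤ resT Γ (vanishingIdeal k {a}) := by
  classical
  intro f hf
  rw [mem_resT_vanishing] at hf ⊢
  refine eval_zero_of_class_sums Γ a f (fun m₀ => ?_)
  have hcs := class_sums Γ a' f hf m₀
  by_cases hex : ∃ m₁ ∈ f.support.filter (fun m => chi Γ m = chi Γ m₀), mpow a m₁ ≠ 0
  · obtain ⟨m₁, hm₁, hane⟩ := hex
    have hchi₁ : chi Γ m₁ = chi Γ m₀ := (Finset.mem_filter.1 hm₁).2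
    have ha' : mpow a' m₁ ≠ 0 := mpow_ne_zero_of_pattern hpat hane
    have hrep : ∀ m ∈ f.support.filter (fun m => chi Γ m = chi Γ m₀),
        mpow a m = mpow a m₁ * (mpow a' m₁)⁻¹ * mpow a' m := by
      intro m hm
      have hA := stepA Γ hle (((Finset.mem_filter.1 hm).2).trans hchi₁.symm)
      field_simp
      linear_combination -hA
    calc ∑ m ∈ f.support.filter (fun m => chi Γ m = chi Γ m₀), coeff m f * mpow a m
        = ∑ m ∈ f.support.filter (fun m => chi Γ m = chi Γ m₀),
            mpow a m₁ * (mpow a' m₁)⁻¹ * (coeff m f * mpow a' m) := by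
          refine Finset.sum_congr rfl fun m hm => ?_
          rw [hrep m hm]; ring
      _ = mpow a m₁ * (mpow a' m₁)⁻¹
            * ∑ m ∈ f.support.filter (fun m => chi Γ m = chi Γ m₀), coeff m f * mpow a' m := by
          rw [Finset.mul_sum]
      _ = 0 := by rw [hcs, mul_zero]
  · push_neg at hex
    exact Finset.sum_eq_zero fun m hm => by rw [hex m hm, mul_zero]

lemma exists_maxW {w : Set (Fin n)} {P : Ideal (MvPolynomial (Fin n) k)}
    (hP : P ∈ specW k w) : ∃ M ∈ maxW k w, P ≤ M := by
  classical
  obtain ⟨hPp, hPX⟩ := hP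
  haveI := hPp
  by_contra hcon
  push_neg at hcon
  set s : MvPolynomial (Fin n) k := ∏ i ∈ Finset.univ.filter (fun i => i ∉ w), X i with hs
  have hsJ : s ∈ P.jacobson := by
    rw [Ideal.jacobson, Ideal.mem_sInf]
    rintro M ⟨hPM, hMmax⟩
    have hex : ∃ i, i ∉ w ∧ X i ∈ M := by
      by_contra hM
      push_neg at hM
      refine hcon M ⟨hMmax, fun i => ⟨fun hXi => ?_, fun hiw => hPM ((hPX i).2 hiw)⟩⟩ hPM
      by_contra hiw
      exact (hM i hiw) hXi
    obtain ⟨i, hiw, hXi⟩ := hex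
    obtain ⟨t, ht⟩ := Finset.dvd_prod_of_mem (fun j => (X j : MvPolynomial (Fin n) k))
      (by simp [hiw] : i ∈ Finset.univ.filter (fun i => i ∉ w))
    rw [hs, ht]
    exact Ideal.mul_mem_right _ _ hXi
  rw [IsJacobsonRing.out (inferInstance) hPp.isRadical] at hsJ
  obtain ⟨i, hi, hXi⟩ := Ideal.IsPrime.prod_mem_iff.1 hsJ
  rw [Finset.mem_filter] at hi
  exact hi.2 ((hPX i).1 hXi)

lemma maxW_vanishing [IsAlgClosed k] {w : Set (Fin n)} {M : Ideal (MvPolynomial (Fin n) k)}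
    (hM : M ∈ maxW k w) :
    ∃ a : Fin n → k, M = vanishingIdeal k {a} ∧ ∀ i, a i = 0 ↔ i ∈ w := by
  obtain ⟨a, ha⟩ := (MvPolynomial.isMaximal_iff_eq_vanishingIdeal_singleton (I := M)).1 hM.1
  refine ⟨a, ha, fun i => ?_⟩
  have h := hM.2 i
  rw [ha, MvPolynomial.mem_vanishingIdeal_singleton_iff, aeval_X] at h
  exact h


end Aux

/-- Proposition 2.6: for `k` algebraically closed, `𝒢-max_w R` is the set
of maximal members of `𝒢-spec_w R`. -/
theorem stmt_11 {k : Type*} [Field k] [IsAlgClosed k] {n : ℕ}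
    (G : Set (Fin n) → Subgroup (Fin n → kˣ))
    (hcompat : ∀ v w : Set (Fin n), v ⊆ w → ∀ P ∈ specW k w,
      resT (G v) P ≤ resT (G w) P) :
    ∀ w : Set (Fin n),
      GmaxW G w = {Q ∈ GspecW (k := k) G w | ∀ Q' ∈ GspecW (k := k) G w, Q ≤ Q' → Q' = Q} := by
  intro w
  ext Q
  simp only [Set.mem_setOf_eq, GmaxW, GspecW]
  constructor
  · rintro ⟨M, hM, rfl⟩
    obtain ⟨a, rfl, hpa⟩ := maxW_vanishing hM
    refine ⟨⟨_, ⟨hM.1.isPrime, hM.2⟩, rfl⟩, ?_⟩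
    rintro Q' ⟨P, hP, rfl⟩ hle
    obtain ⟨M', hM', hPM'⟩ := exists_maxW hP
    obtain ⟨a', rfl, hpa'⟩ := maxW_vanishing hM'
    have hpat : ∀ i, a i = 0 ↔ a' i = 0 := fun i => (hpa i).trans (hpa' i).symm
    have h1 : resT (G w) P ≤ resT (G w) (vanishingIdeal k {a'}) := resT_mono _ hPM'
    have h2 := key (G w) hpat (le_trans hle h1)
    exact le_antisymm (le_trans h1 h2) hle
  · rintro ⟨⟨P, hP, rfl⟩, hmax⟩
    obtain ⟨M, hM, hPM⟩ := exists_maxW hP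
    have h1 : resT (G w) P ≤ resT (G w) M := resT_mono _ hPM
    exact ⟨M, hM, (hmax (resT (G w) M) ⟨M, ⟨hM.1.isPrime, hM.2⟩, rfl⟩ h1).symm⟩
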